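/- In the non-autonomous conjugation setup, for all integers m, n ≥ 0 and every w ∈ ℂ² with ‖w‖ ≤ s_m: (i) ‖φ_{n+m,m}(w) − h̄_m(w)‖ ≤ (M/(1 − D^k/(λC)))·‖w‖^k, and (ii) ‖φ_{n+m,m}(w)‖ ≤ (M/(1 − D^k/(λC)) + 2)·‖w‖. -/

import Mathlib

open Set Filter Metric Topology

noncomputable section

/-- The radius `r_n = min{(1-λ)C²D^{2n(k-2+ε)}/(2Z), D^{2n(k-2+ε)}/(48Z),
D^{4n(k-2+ε)/(3-k)}/2}`. -/
def rSeq (C D k ε Z lam : ℝ) (n : ℕ) : ℝ :=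
  min (min ((1 - lam) * C ^ 2 * D ^ (2 * (n : ℝ) * (k - 2 + ε)) / (2 * Z))
        (D ^ (2 * (n : ℝ) * (k - 2 + ε)) / (48 * Z)))
      (D ^ (4 * (n : ℝ) * (k - 2 + ε) / (3 - k)) / 2)

/-- `s_n = (M/(1 - D^k/(λC)) + 2)⁻¹ · r_n`. -/
def sSeq (C D k ε Z lam M : ℝ) (n : ℕ) : ℝ :=
  (M / (1 - D ^ k / (lam * C)) + 2)⁻¹ * rSeq C D k ε Z lam n

/-- The map `g(z,w) = (a z, b w + c z + d z²)`. -/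
def gMap (a b c d : ℂ) (z : ℂ × ℂ) : ℂ × ℂ :=
  (a * z.1, b * z.2 + c * z.1 + d * z.1 ^ 2)

/-- A homogeneous quadratic map of ℂ² with coefficient vector `cf`. -/
def quadMap (cf : Fin 6 → ℂ) (z : ℂ × ℂ) : ℂ × ℂ :=
  (cf 0 * z.1 ^ 2 + cf 1 * z.1 * z.2 + cf 2 * z.2 ^ 2,
   cf 3 * z.1 ^ 2 + cf 4 * z.1 * z.2 + cf 5 * z.2 ^ 2)

/-- `h̄_n = id + (homogeneous quadratic with coefficients ch n)`. -/
def hBar (ch : ℕ → Fin 6 → ℂ) (n : ℕ) (z : ℂ × ℂ) : ℂ × ℂ := z + quadMap (ch n) z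

/-- `fComp f m n = f̄_{n,m} = f (n-1) ∘ ⋯ ∘ f m` (the identity if `n ≤ m`). -/
def fComp (f : ℕ → (ℂ × ℂ) → (ℂ × ℂ)) (m : ℕ) : ℕ → (ℂ × ℂ) → (ℂ × ℂ)
  | 0 => id
  | n + 1 => if m ≤ n then f n ∘ fComp f m n else id

/-- `gInvComp gi m n = (ḡ_{n,m})⁻¹ = gi m ∘ ⋯ ∘ gi (n-1)` (the identity if `n ≤ m`). -/
def gInvComp (gi : ℕ → (ℂ × ℂ) → (ℂ × ℂ)) (m : ℕ) : ℕ → (ℂ × ℂ) → (ℂ × ℂ)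
  | 0 => id
  | n + 1 => if m ≤ n then gInvComp gi m n ∘ gi n else id

/-- `φ_{n,m} = ḡ_{n,m}⁻¹ ∘ h̄_n ∘ f̄_{n,m}`. -/
def phiMap (gi : ℕ → (ℂ × ℂ) → (ℂ × ℂ)) (ch : ℕ → Fin 6 → ℂ)
    (f : ℕ → (ℂ × ℂ) → (ℂ × ℂ)) (n m : ℕ) (z : ℂ × ℂ) : ℂ × ℂ :=
  gInvComp gi m n (hBar ch n (fComp f m n z))

/-! ### Auxiliary lemmas -/

lemma quadMap_zero (cf : Fin 6 → ℂ) : quadMap cf 0 = 0 := by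
  simp [quadMap, Prod.ext_iff]

lemma quadMap_norm_le (cf : Fin 6 → ℂ) (z : ℂ × ℂ) :
    ‖quadMap cf z‖ ≤ (‖cf 0‖ + ‖cf 1‖ + ‖cf 2‖
      + ‖cf 3‖ + ‖cf 4‖ + ‖cf 5‖) * ‖z‖ ^ 2 := by
  have h1 : ‖z.1‖ ≤ ‖z‖ := norm_fst_le z
  have h2 : ‖z.2‖ ≤ ‖z‖ := norm_snd_le z
  have hz : (0:ℝ) ≤ ‖z‖ := norm_nonneg z
  have hz1 : (0:ℝ) ≤ ‖z.1‖ := norm_nonneg _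
  have hz2 : (0:ℝ) ≤ ‖z.2‖ := norm_nonneg _
  have hzz : (0:ℝ) ≤ ‖z‖ ^ 2 := by positivity
  have key : ∀ c0 c1 c2 : ℂ, ‖c0 * z.1 ^ 2 + c1 * z.1 * z.2 + c2 * z.2 ^ 2‖
      ≤ (‖c0‖ + ‖c1‖ + ‖c2‖) * ‖z‖ ^ 2 := by
    intro c0 c1 c2
    calc ‖c0 * z.1 ^ 2 + c1 * z.1 * z.2 + c2 * z.2 ^ 2‖
        ≤ ‖c0 * z.1 ^ 2‖ + ‖c1 * z.1 * z.2‖ + ‖c2 * z.2 ^ 2‖ := norm_add₃_le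
      _ = ‖c0‖ * (‖z.1‖ * ‖z.1‖) + ‖c1‖ * (‖z.1‖ * ‖z.2‖)
            + ‖c2‖ * (‖z.2‖ * ‖z.2‖) := by
          simp [norm_mul, pow_two]; ring
      _ ≤ (‖c0‖ + ‖c1‖ + ‖c2‖) * ‖z‖ ^ 2 := by
          have k0 := norm_nonneg c0
          have k1 := norm_nonneg c1
          have k2 := norm_nonneg c2
          have m1 : ‖z.1‖ * ‖z.1‖ ≤ ‖z‖ ^ 2 := by nlinarith
          have m2 : ‖z.1‖ * ‖z.2‖ ≤ ‖z‖ ^ 2 := by nlinarith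
          have m3 : ‖z.2‖ * ‖z.2‖ ≤ ‖z‖ ^ 2 := by nlinarith
          nlinarith [mul_le_mul_of_nonneg_left m1 k0, mul_le_mul_of_nonneg_left m2 k1,
            mul_le_mul_of_nonneg_left m3 k2]
  have k3 := norm_nonneg (cf 0)
  have k4 := norm_nonneg (cf 1)
  have k5 := norm_nonneg (cf 2)
  have k0 := norm_nonneg (cf 3)
  have k1 := norm_nonneg (cf 4)
  have k2 := norm_nonneg (cf 5)
  rw [Prod.norm_def]
  apply max_le
  · refine (key _ _ _).trans ?_
    apply mul_le_mul_of_nonneg_right _ hzz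
    linarith
  · refine (key _ _ _).trans ?_
    apply mul_le_mul_of_nonneg_right _ hzz
    linarith

lemma quadMap_hasFDerivAt (cf : Fin 6 → ℂ) :
    HasFDerivAt (quadMap cf) (0 : (ℂ × ℂ) →L[ℂ] (ℂ × ℂ)) 0 := by
  set A := ‖cf 0‖ + ‖cf 1‖ + ‖cf 2‖
      + ‖cf 3‖ + ‖cf 4‖ + ‖cf 5‖ with hA
  have hA0 : 0 ≤ A := by
    have := norm_nonneg (cf 0); have := norm_nonneg (cf 1)
    have := norm_nonneg (cf 2); have := norm_nonneg (cf 3)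
    have := norm_nonneg (cf 4); have := norm_nonneg (cf 5)
    rw [hA]; linarith
  rw [hasFDerivAt_iff_isLittleO_nhds_zero]
  rw [Asymptotics.isLittleO_iff]
  intro c hc
  have hball : Metric.ball (0 : ℂ × ℂ) (c / (A + 1)) ∈ 𝓝 (0 : ℂ × ℂ) :=
    Metric.ball_mem_nhds _ (by positivity)
  filter_upwards [hball] with h hh
  rw [mem_ball_zero_iff] at hh
  have h1 : (A + 1) * ‖h‖ ≤ c := by
    have := (lt_div_iff₀ (by positivity : (0:ℝ) < A + 1)).1 hh
    linarith
  simp only [quadMap_zero, ContinuousLinearMap.zero_apply, sub_zero, zero_add]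
  calc ‖quadMap cf h‖ ≤ A * ‖h‖ ^ 2 := quadMap_norm_le cf h
    _ ≤ c * ‖h‖ := by nlinarith [norm_nonneg h, sq_nonneg ‖h‖]

lemma hBar_zero (ch : ℕ → Fin 6 → ℂ) (n : ℕ) : hBar ch n 0 = 0 := by
  simp [hBar, quadMap_zero]

lemma hBar_hasFDerivAt (ch : ℕ → Fin 6 → ℂ) (n : ℕ) :
    HasFDerivAt (hBar ch n) (ContinuousLinearMap.id ℂ (ℂ × ℂ)) 0 := by
  have h := (hasFDerivAt_id (0 : ℂ × ℂ)).add (quadMap_hasFDerivAt (ch n))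
  rw [show hBar ch n = id + quadMap (ch n) from rfl]
  simpa using h

/-- the linear part of `gMap`, as a continuous linear map. -/
def gLin (a b c : ℂ) : (ℂ × ℂ) →L[ℂ] (ℂ × ℂ) :=
  (a • ContinuousLinearMap.fst ℂ ℂ ℂ).prod
    (c • ContinuousLinearMap.fst ℂ ℂ ℂ + b • ContinuousLinearMap.snd ℂ ℂ ℂ)

lemma gLin_apply (a b c : ℂ) (z : ℂ × ℂ) : gLin a b c z = (a * z.1, c * z.1 + b * z.2) := by
  simp [gLin]

lemma gMap_eq (a b c d : ℂ) (z : ℂ × ℂ) :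
    gMap a b c d z = gLin a b c z + ((0:ℂ), d * z.1 ^ 2) := by
  rw [gLin_apply]
  simp only [gMap, Prod.mk_add_mk, Prod.ext_iff]
  constructor <;> ring

lemma gMap_hasFDerivAt (a b c d : ℂ) :
    HasFDerivAt (gMap a b c d) (gLin a b c) 0 := by
  have h := ((gLin a b c).hasFDerivAt (x := (0 : ℂ × ℂ))).add
    (quadMap_hasFDerivAt ![0, 0, 0, d, 0, 0])
  have hfun : (fun z : ℂ × ℂ => gLin a b c z + quadMap ![0, 0, 0, d, 0, 0] z)
      = gMap a b c d := by
    funext z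
    rw [gMap_eq]
    have hq : quadMap ![0, 0, 0, d, 0, 0] z
        = ((0:ℂ) * z.1 ^ 2 + 0 * z.1 * z.2 + 0 * z.2 ^ 2,
           d * z.1 ^ 2 + 0 * z.1 * z.2 + 0 * z.2 ^ 2) := rfl
    rw [hq]
    congr 1 <;> ring
  rw [show (⇑(gLin a b c) + quadMap ![0, 0, 0, d, 0, 0]) = gMap a b c d from hfun] at h
  simpa using h

lemma clm_lower_bound {f : (ℂ × ℂ) → (ℂ × ℂ)} {L : (ℂ × ℂ) →L[ℂ] (ℂ × ℂ)} {c0 : ℝ}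
    (hf : HasFDerivAt f L 0) (hf0 : f 0 = 0)
    (hlow : ∀ z : ℂ × ℂ, ‖z‖ < 1 → c0 * ‖z‖ ≤ ‖f z‖) (z : ℂ × ℂ) :
    c0 * ‖z‖ ≤ ‖L z‖ := by
  rcases eq_or_ne z 0 with rfl | hz
  · simp
  have hzpos : 0 < ‖z‖ := norm_pos_iff.2 hz
  refine le_of_forall_pos_le_add ?_
  intro ε hε
  rw [hasFDerivAt_iff_isLittleO_nhds_zero] at hf
  have hc'pos : 0 < ε / (2 * ‖z‖) := by positivity
  have hev := (Asymptotics.isLittleO_iff.mp hf) hc'pos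
  have hcont : Continuous (fun t : ℝ => (t : ℂ) • z) :=
    (Complex.continuous_ofReal.smul continuous_const)
  have htend : Tendsto (fun t : ℝ => (t : ℂ) • z) (𝓝[>] (0:ℝ)) (𝓝 (0 : ℂ × ℂ)) := by
    have h0 : Tendsto (fun t : ℝ => (t : ℂ) • z) (𝓝 0) (𝓝 (((0:ℝ) : ℂ) • z)) :=
      hcont.tendsto 0
    simpa using h0.mono_left nhdsWithin_le_nhds
  have hball : ∀ᶠ x : ℂ × ℂ in 𝓝 0, ‖x‖ < 1 := by
    filter_upwards [Metric.ball_mem_nhds (0 : ℂ × ℂ) one_pos] with x hx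
    simpa [mem_ball_zero_iff] using hx
  have hpos : ∀ᶠ t : ℝ in 𝓝[>] (0:ℝ), 0 < t := eventually_mem_nhdsWithin
  obtain ⟨t, ht1, ht2, htpos⟩ :=
    ((htend.eventually hev).and ((htend.eventually hball).and hpos)).exists
  have hnorm : ‖(t : ℂ) • z‖ = t * ‖z‖ := by
    rw [norm_smul, Complex.norm_real, Real.norm_of_nonneg htpos.le]
  have hLn : ‖L ((t : ℂ) • z)‖ = t * ‖L z‖ := by
    rw [L.map_smul, norm_smul, Complex.norm_real, Real.norm_of_nonneg htpos.le]
  rw [zero_add, hf0, sub_zero] at ht1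
  have hflow := hlow _ ht2
  have h5 : ‖f ((t : ℂ) • z)‖ - ‖L ((t : ℂ) • z)‖ ≤ ε / (2 * ‖z‖) * ‖(t : ℂ) • z‖ :=
    (norm_sub_norm_le _ _).trans ht1
  have h6 : c0 * (t * ‖z‖) - t * ‖L z‖ ≤ ε / (2 * ‖z‖) * (t * ‖z‖) := by
    rw [← hnorm, ← hLn]
    exact le_trans (by linarith [hflow, hnorm ▸ hflow]) h5
  have h7 : ε / (2 * ‖z‖) * (t * ‖z‖) = t * (ε / 2) := by
    field_simp
  have h8 : c0 * ‖z‖ - ‖L z‖ ≤ ε / 2 := by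
    rw [h7] at h6
    nlinarith
  linarith

lemma fderiv_eq_of_iterated_one {f g : (ℂ × ℂ) → (ℂ × ℂ)} {F G : (ℂ × ℂ) →L[ℂ] (ℂ × ℂ)}
    (hf : HasFDerivAt f F 0) (hg : HasFDerivAt g G 0)
    (h : iteratedFDeriv ℂ 1 f 0 = iteratedFDeriv ℂ 1 g 0) : F = G := by
  refine ContinuousLinearMap.ext fun v => ?_
  have h1 : iteratedFDeriv ℂ 1 f 0 (fun _ => v) = F v := by
    rw [iteratedFDeriv_one_apply, hf.fderiv]
  have h2 : iteratedFDeriv ℂ 1 g 0 (fun _ => v) = G v := by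
    rw [iteratedFDeriv_one_apply, hg.fderiv]
  rw [← h1, ← h2, h]

lemma fComp_self (f : ℕ → (ℂ × ℂ) → (ℂ × ℂ)) (m : ℕ) : fComp f m m = id := by
  cases m with
  | zero => rfl
  | succ j => rw [fComp, if_neg (by omega)]

lemma gInvComp_self (gi : ℕ → (ℂ × ℂ) → (ℂ × ℂ)) (m : ℕ) : gInvComp gi m m = id := by
  cases m with
  | zero => rfl
  | succ j => rw [gInvComp, if_neg (by omega)]

lemma fComp_split (f : ℕ → (ℂ × ℂ) → (ℂ × ℂ)) :
    ∀ N m, m < N → fComp f m N = fComp f (m + 1) N ∘ f m := by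
  intro N
  induction N with
  | zero => intro m h; omega
  | succ N ih =>
    intro m h
    rcases Nat.lt_or_ge m N with h' | h'
    · rw [fComp, if_pos h'.le, fComp, if_pos (show m + 1 ≤ N by omega), ih m h']
      rfl
    · have hm : m = N := by omega
      subst hm
      rw [fComp, if_pos le_rfl, fComp, if_neg (by omega), fComp_self]
      funext x
      simp

lemma gInvComp_split (gi : ℕ → (ℂ × ℂ) → (ℂ × ℂ)) :
    ∀ N m, m < N → gInvComp gi m N = gi m ∘ gInvComp gi (m + 1) N := by
  intro N
  induction N with
  | zero => intro m h; omega
  | succ N ih =>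
    intro m h
    rcases Nat.lt_or_ge m N with h' | h'
    · rw [gInvComp, if_pos h'.le, gInvComp, if_pos (show m + 1 ≤ N by omega), ih m h']
      rfl
    · have hm : m = N := by omega
      subst hm
      rw [gInvComp, if_pos le_rfl, gInvComp, if_neg (by omega), gInvComp_self]
      funext x
      simp

lemma phiMap_self (gi : ℕ → (ℂ × ℂ) → (ℂ × ℂ)) (ch : ℕ → Fin 6 → ℂ)
    (f : ℕ → (ℂ × ℂ) → (ℂ × ℂ)) (m : ℕ) (w : ℂ × ℂ) :
    phiMap gi ch f m m w = hBar ch m w := by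
  unfold phiMap
  rw [fComp_self, gInvComp_self]
  rfl

lemma phiMap_rec (gi : ℕ → (ℂ × ℂ) → (ℂ × ℂ)) (ch : ℕ → Fin 6 → ℂ)
    (f : ℕ → (ℂ × ℂ) → (ℂ × ℂ)) {N m : ℕ} (h : m < N) (w : ℂ × ℂ) :
    phiMap gi ch f N m w = gi m (phiMap gi ch f N (m + 1) (f m w)) := by
  unfold phiMap
  rw [fComp_split f N m h, gInvComp_split gi N m h]
  rfl

lemma rpow_le_self_of_le_one {x k : ℝ} (hx0 : 0 ≤ x) (hx1 : x ≤ 1) (hk : 1 ≤ k) :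
    x ^ k ≤ x := by
  rcases eq_or_lt_of_le hx0 with h | h
  · rw [← h, Real.zero_rpow (by linarith)]
  · calc x ^ k ≤ x ^ (1:ℝ) := Real.rpow_le_rpow_of_exponent_ge h hx1 hk
      _ = x := Real.rpow_one x

set_option maxHeartbeats 1000000 in
/-- The one-step contraction property of `ḡ_m⁻¹`. -/
lemma one_step_contract
    {fbm gbm gbinvm : (ℂ × ℂ) → (ℂ × ℂ)} {am bm cm dm : ℂ} {ch : ℕ → Fin 6 → ℂ} {m : ℕ}
    {C lam rm : ℝ}
    (hC : 0 < C) (hlam0 : 0 < lam) (hlam1 : lam < 1)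
    (haC : C ≤ ‖am‖)
    (hgb : gbm = gMap am bm cm dm ∨
      ∃ Mu : (ℂ × ℂ) ≃ₗᵢ[ℂ] (ℂ × ℂ), gbm = gMap am bm cm dm ∘ Mu)
    (hginv : Function.RightInverse gbinvm gbm)
    (htay : iteratedFDeriv ℂ 1 (gbm ∘ hBar ch m) 0 = iteratedFDeriv ℂ 1 (hBar ch (m+1) ∘ fbm) 0)
    (hfdiff : DifferentiableAt ℂ fbm 0) (hf0 : fbm 0 = 0)
    (hflow : ∀ z : ℂ × ℂ, ‖z‖ < 1 → C * ‖z‖ ≤ ‖fbm z‖)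
    (hdrm : ‖dm‖ * (2 * rm) ≤ (1 - lam) * C ^ 2)
    (hrm0 : 0 ≤ rm)
    (X Y : ℂ × ℂ) (hX : ‖X‖ ≤ rm) (hY : ‖Y‖ ≤ rm) :
    lam * C * ‖gbinvm X - gbinvm Y‖ ≤ ‖X - Y‖ := by
  have ha0 : am ≠ 0 := by
    intro h0
    rw [h0] at haC
    simp only [norm_zero] at haC
    linarith
  obtain ⟨B, HB, Hdec⟩ : ∃ B : (ℂ × ℂ) →L[ℂ] (ℂ × ℂ), HasFDerivAt gbm B 0 ∧
      ∀ x : ℂ × ℂ, gbm x = B x + ((0:ℂ), dm * ((gbm x).1 / am) ^ 2) := by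
    rcases hgb with hg | ⟨Mu, hg⟩
    · refine ⟨gLin am bm cm, ?_, ?_⟩
      · rw [hg]; exact gMap_hasFDerivAt am bm cm dm
      · intro x
        rw [hg]
        have h1 : (gMap am bm cm dm x).1 = am * x.1 := rfl
        rw [h1, mul_div_cancel_left₀ _ ha0]
        exact gMap_eq am bm cm dm x
    · refine ⟨(gLin am bm cm).comp
        (Mu.toContinuousLinearEquiv : (ℂ × ℂ) →L[ℂ] (ℂ × ℂ)), ?_, ?_⟩
      · rw [hg]
        have hMu : HasFDerivAt (⇑Mu)
            ((Mu.toContinuousLinearEquiv : (ℂ × ℂ) →L[ℂ] (ℂ × ℂ))) 0 := by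
          have h := Mu.toContinuousLinearEquiv.hasFDerivAt (x := (0 : ℂ × ℂ))
          simpa [LinearIsometryEquiv.coe_toContinuousLinearEquiv] using h
        have h00 : Mu (0 : ℂ × ℂ) = 0 := map_zero Mu
        have hg0 : HasFDerivAt (gMap am bm cm dm) (gLin am bm cm) (Mu (0 : ℂ × ℂ)) := by
          rw [h00]; exact gMap_hasFDerivAt am bm cm dm
        exact HasFDerivAt.comp 0 hg0 hMu
      · intro x
        rw [hg]
        simp only [Function.comp_apply, ContinuousLinearMap.coe_comp',
          ContinuousLinearEquiv.coe_coe, LinearIsometryEquiv.coe_toContinuousLinearEquiv]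
        have h2 : (gMap am bm cm dm (Mu x)).1 = am * (Mu x).1 := rfl
        rw [h2, mul_div_cancel_left₀ _ ha0]
        exact gMap_eq am bm cm dm (Mu x)
  have hfd : HasFDerivAt fbm (fderiv ℂ fbm 0) 0 := hfdiff.hasFDerivAt
  have hcomp1 : HasFDerivAt (gbm ∘ hBar ch m) B 0 := by
    have h0 : hBar ch m 0 = 0 := hBar_zero ch m
    have h := HasFDerivAt.comp (x := (0 : ℂ × ℂ)) (h0 ▸ HB) (hBar_hasFDerivAt ch m)
    simpa using h
  have hcomp2 : HasFDerivAt (hBar ch (m+1) ∘ fbm) (fderiv ℂ fbm 0) 0 := by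
    have h := HasFDerivAt.comp (x := (0 : ℂ × ℂ)) (hf0 ▸ hBar_hasFDerivAt ch (m+1)) hfd
    simpa using h
  have hBL : B = fderiv ℂ fbm 0 := fderiv_eq_of_iterated_one hcomp1 hcomp2 htay
  have hlowB : ∀ zz : ℂ × ℂ, C * ‖zz‖ ≤ ‖B zz‖ := by
    rw [hBL]
    exact fun zz => clm_lower_bound hfd hf0 hflow zz
  set u := gbinvm X with hu'
  set v := gbinvm Y with hv'
  have hu : gbm u = X := hginv X
  have hv : gbm v = Y := hginv Y
  have hBu : B u = X - ((0:ℂ), dm * (X.1 / am) ^ 2) := by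
    have h := Hdec u
    rw [hu] at h
    exact eq_sub_of_add_eq h.symm
  have hBv : B v = Y - ((0:ℂ), dm * (Y.1 / am) ^ 2) := by
    have h := Hdec v
    rw [hv] at h
    exact eq_sub_of_add_eq h.symm
  have hkey : C * ‖u - v‖ ≤ ‖B u - B v‖ := by
    rw [← map_sub]
    exact hlowB _
  have hX1 : ‖X.1 - Y.1‖ ≤ ‖X - Y‖ := by
    have := norm_fst_le (X - Y)
    simpa using this
  have hX2 : ‖X.1 + Y.1‖ ≤ 2 * rm := by
    have hx := norm_fst_le X
    have hy := norm_fst_le Y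
    have := norm_add_le X.1 Y.1
    linarith
  have hquad : ‖((0:ℂ), dm * (X.1 / am) ^ 2) - ((0:ℂ), dm * (Y.1 / am) ^ 2)‖
      ≤ (1 - lam) * ‖X - Y‖ := by
    have heq : ((0:ℂ), dm * (X.1 / am) ^ 2) - ((0:ℂ), dm * (Y.1 / am) ^ 2)
        = ((0:ℂ), dm * ((X.1 - Y.1) / am) * ((X.1 + Y.1) / am)) := by
      have hfact : dm * (X.1 / am) ^ 2 - dm * (Y.1 / am) ^ 2
          = dm * ((X.1 - Y.1) / am) * ((X.1 + Y.1) / am) := by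
        field_simp
        ring
      simp only [Prod.mk_sub_mk, sub_self]
      rw [hfact]
    rw [heq]
    have hnorm0 : ‖((0:ℂ), dm * ((X.1 - Y.1) / am) * ((X.1 + Y.1) / am))‖
        = ‖dm‖ * (‖X.1 - Y.1‖ / ‖am‖)
            * (‖X.1 + Y.1‖ / ‖am‖) := by
      rw [Prod.norm_def]
      simp only [norm_zero, norm_mul, norm_div]
      rw [max_eq_right (by positivity)]
    rw [hnorm0]
    have haC' : 0 < ‖am‖ := lt_of_lt_of_le hC haC
    have s1 : ‖X.1 - Y.1‖ / ‖am‖ ≤ ‖X - Y‖ / C :=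
      div_le_div₀ (norm_nonneg _) hX1 hC haC
    have s2 : ‖X.1 + Y.1‖ / ‖am‖ ≤ (2 * rm) / C :=
      div_le_div₀ (by positivity) hX2 hC haC
    have t0 : (0:ℝ) ≤ ‖dm‖ := norm_nonneg dm
    calc ‖dm‖ * (‖X.1 - Y.1‖ / ‖am‖)
          * (‖X.1 + Y.1‖ / ‖am‖)
        ≤ ‖dm‖ * (‖X - Y‖ / C) * ((2 * rm) / C) := by
          apply mul_le_mul (mul_le_mul_of_nonneg_left s1 t0) s2
          · positivity
          · positivity
      _ = (‖dm‖ * (2 * rm) / C ^ 2) * ‖X - Y‖ := by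
          field_simp
      _ ≤ (1 - lam) * ‖X - Y‖ := by
          apply mul_le_mul_of_nonneg_right _ (norm_nonneg _)
          rw [div_le_iff₀ (by positivity : (0:ℝ) < C ^ 2)]
          calc ‖dm‖ * (2 * rm) ≤ (1 - lam) * C ^ 2 := hdrm
            _ = (1 - lam) * C ^ 2 := rfl
  have hBuv : ‖B u - B v‖ ≤ (2 - lam) * ‖X - Y‖ := by
    rw [hBu, hBv]
    have hh : X - ((0:ℂ), dm * (X.1 / am) ^ 2) - (Y - ((0:ℂ), dm * (Y.1 / am) ^ 2))
        = (X - Y) - (((0:ℂ), dm * (X.1 / am) ^ 2) - ((0:ℂ), dm * (Y.1 / am) ^ 2)) := by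
      abel
    rw [hh]
    calc ‖(X - Y) - (((0:ℂ), dm * (X.1 / am) ^ 2) - ((0:ℂ), dm * (Y.1 / am) ^ 2))‖
        ≤ ‖X - Y‖ + ‖((0:ℂ), dm * (X.1 / am) ^ 2) - ((0:ℂ), dm * (Y.1 / am) ^ 2)‖ :=
          norm_sub_le _ _
      _ ≤ (2 - lam) * ‖X - Y‖ := by linarith [hquad]
  have h10 : C * ‖u - v‖ ≤ (2 - lam) * ‖X - Y‖ := hkey.trans hBuv
  nlinarith [mul_le_mul_of_nonneg_left h10 hlam0.le, sq_nonneg (1 - lam),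
    norm_nonneg (X - Y), norm_nonneg (u - v)]

lemma rSeq_pos {C D k ε Z lam : ℝ} (hC : 0 < C) (hD0 : 0 < D) (hZ : 0 < Z)
    (h1lam : 0 < 1 - lam) (m : ℕ) : 0 < rSeq C D k ε Z lam m := by
  have e1 : (0:ℝ) < D ^ (2 * (m:ℝ) * (k - 2 + ε)) := Real.rpow_pos_of_pos hD0 _
  have e3 : (0:ℝ) < D ^ (4 * (m:ℝ) * (k - 2 + ε) / (3 - k)) := Real.rpow_pos_of_pos hD0 _
  refine lt_min (lt_min ?_ ?_) ?_
  · exact div_pos (mul_pos (mul_pos h1lam (by positivity)) e1) (by positivity)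
  · exact div_pos e1 (by positivity)
  · exact div_pos e3 (by norm_num)

lemma rSeq_le_P1 {C D k ε Z lam : ℝ} (m : ℕ) :
    rSeq C D k ε Z lam m ≤ (1 - lam) * C ^ 2 * D ^ (2 * (m:ℝ) * (k - 2 + ε)) / (2 * Z) :=
  le_trans (min_le_left _ _) (min_le_left _ _)

lemma rSeq_le_P2 {C D k ε Z lam : ℝ} (m : ℕ) :
    rSeq C D k ε Z lam m ≤ D ^ (2 * (m:ℝ) * (k - 2 + ε)) / (48 * Z) :=
  le_trans (min_le_left _ _) (min_le_right _ _)

lemma rSeq_le_half {C D k ε Z lam : ℝ} (hD0 : 0 < D) (hD : D < 1)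
    (hke0 : 0 ≤ k - 2 + ε) (h3k : 0 < 3 - k) (m : ℕ) :
    rSeq C D k ε Z lam m ≤ 1 / 2 := by
  refine le_trans (min_le_right _ _) ?_
  have hexp : (0:ℝ) ≤ 4 * (m:ℝ) * (k - 2 + ε) / (3 - k) := by
    apply div_nonneg _ h3k.le
    have : (0:ℝ) ≤ (m:ℝ) := Nat.cast_nonneg m
    nlinarith
  have := Real.rpow_le_one hD0.le hD.le hexp
  linarith

lemma rSeq_step {C D k ε Z lam : ℝ} (hC : 0 < C) (hD0 : 0 < D) (hD : D < 1) (hZ : 0 < Z)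
    (h1lam : 0 < 1 - lam) (hke0 : 0 ≤ k - 2 + ε) (h3k : 0 < 3 - k)
    (h1 : D ≤ D ^ (2 * (k - 2 + ε))) (h3 : D ≤ D ^ (4 * (k - 2 + ε) / (3 - k)))
    (m : ℕ) : D * rSeq C D k ε Z lam m ≤ rSeq C D k ε Z lam (m + 1) := by
  have e1p : (0:ℝ) < D ^ (2 * (m:ℝ) * (k - 2 + ε)) := Real.rpow_pos_of_pos hD0 _
  have e3p : (0:ℝ) < D ^ (4 * (m:ℝ) * (k - 2 + ε) / (3 - k)) := Real.rpow_pos_of_pos hD0 _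
  have hs1 : D ^ (2 * ((m:ℝ) + 1) * (k - 2 + ε))
      = D ^ (2 * (m:ℝ) * (k - 2 + ε)) * D ^ (2 * (k - 2 + ε)) := by
    rw [← Real.rpow_add hD0]; congr 1; ring
  have hs3 : D ^ (4 * ((m:ℝ) + 1) * (k - 2 + ε) / (3 - k))
      = D ^ (4 * (m:ℝ) * (k - 2 + ε) / (3 - k)) * D ^ (4 * (k - 2 + ε) / (3 - k)) := by
    rw [← Real.rpow_add hD0]; congr 1; ring
  have hP1 : rSeq C D k ε Z lam m ≤ (1 - lam) * C ^ 2 * D ^ (2 * (m:ℝ) * (k - 2 + ε)) / (2 * Z) :=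
    rSeq_le_P1 m
  have hP2 : rSeq C D k ε Z lam m ≤ D ^ (2 * (m:ℝ) * (k - 2 + ε)) / (48 * Z) := rSeq_le_P2 m
  have hP3 : rSeq C D k ε Z lam m ≤ D ^ (4 * (m:ℝ) * (k - 2 + ε) / (3 - k)) / 2 :=
    min_le_right _ _
  unfold rSeq
  push_cast
  refine le_min (le_min ?_ ?_) ?_
  · calc D * rSeq C D k ε Z lam m
        ≤ D * ((1 - lam) * C ^ 2 * D ^ (2 * (m:ℝ) * (k - 2 + ε)) / (2 * Z)) :=
          mul_le_mul_of_nonneg_left hP1 hD0.le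
      _ = ((1 - lam) * C ^ 2 * D ^ (2 * (m:ℝ) * (k - 2 + ε)) / (2 * Z)) * D := by ring
      _ ≤ ((1 - lam) * C ^ 2 * D ^ (2 * (m:ℝ) * (k - 2 + ε)) / (2 * Z)) * D ^ (2 * (k - 2 + ε)) := by
          apply mul_le_mul_of_nonneg_left h1
          have : (0:ℝ) < (1 - lam) * C ^ 2 * D ^ (2 * (m:ℝ) * (k - 2 + ε)) / (2 * Z) :=
            div_pos (mul_pos (mul_pos h1lam (by positivity)) e1p) (by positivity)
          linarith
      _ = (1 - lam) * C ^ 2 * D ^ (2 * ((m:ℝ) + 1) * (k - 2 + ε)) / (2 * Z) := by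
          rw [hs1]; ring
  · calc D * rSeq C D k ε Z lam m
        ≤ D * (D ^ (2 * (m:ℝ) * (k - 2 + ε)) / (48 * Z)) := mul_le_mul_of_nonneg_left hP2 hD0.le
      _ = (D ^ (2 * (m:ℝ) * (k - 2 + ε)) / (48 * Z)) * D := by ring
      _ ≤ (D ^ (2 * (m:ℝ) * (k - 2 + ε)) / (48 * Z)) * D ^ (2 * (k - 2 + ε)) := by
          apply mul_le_mul_of_nonneg_left h1
          positivity
      _ = D ^ (2 * ((m:ℝ) + 1) * (k - 2 + ε)) / (48 * Z) := by rw [hs1]; ring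
  · calc D * rSeq C D k ε Z lam m
        ≤ D * (D ^ (4 * (m:ℝ) * (k - 2 + ε) / (3 - k)) / 2) := mul_le_mul_of_nonneg_left hP3 hD0.le
      _ = (D ^ (4 * (m:ℝ) * (k - 2 + ε) / (3 - k)) / 2) * D := by ring
      _ ≤ (D ^ (4 * (m:ℝ) * (k - 2 + ε) / (3 - k)) / 2) * D ^ (4 * (k - 2 + ε) / (3 - k)) := by
          apply mul_le_mul_of_nonneg_left h3
          positivity
      _ = D ^ (4 * ((m:ℝ) + 1) * (k - 2 + ε) / (3 - k)) / 2 := by rw [hs3]; ring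

set_option maxHeartbeats 800000 in
lemma rSeq_antitone {C D k ε Z lam : ℝ} (hC : 0 < C) (hD0 : 0 < D) (hD : D < 1) (hZ : 0 < Z)
    (h1lam : 0 < 1 - lam) (hke0 : 0 ≤ k - 2 + ε) (h3k : 0 < 3 - k) (m : ℕ) :
    rSeq C D k ε Z lam (m + 1) ≤ rSeq C D k ε Z lam m := by
  have hm0 : (0:ℝ) ≤ (m:ℝ) := Nat.cast_nonneg m
  have hcast : ((m + 1 : ℕ):ℝ) = (m:ℝ) + 1 := by push_cast; ring
  have he1 : 2 * (m:ℝ) * (k - 2 + ε) ≤ 2 * ((m:ℝ) + 1) * (k - 2 + ε) := by nlinarith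
  have he3 : 4 * (m:ℝ) * (k - 2 + ε) / (3 - k) ≤ 4 * ((m:ℝ) + 1) * (k - 2 + ε) / (3 - k) := by
    have h4 : (0:ℝ) ≤ 4 * (k - 2 + ε) / (3 - k) := div_nonneg (by linarith) h3k.le
    have hexpand : 4 * ((m:ℝ) + 1) * (k - 2 + ε) / (3 - k)
        = 4 * (m:ℝ) * (k - 2 + ε) / (3 - k) + 4 * (k - 2 + ε) / (3 - k) := by ring
    linarith
  have hd1 : D ^ (2 * ((m:ℝ) + 1) * (k - 2 + ε)) ≤ D ^ (2 * (m:ℝ) * (k - 2 + ε)) :=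
    Real.rpow_le_rpow_of_exponent_ge hD0 hD.le he1
  have hd3 : D ^ (4 * ((m:ℝ) + 1) * (k - 2 + ε) / (3 - k))
      ≤ D ^ (4 * (m:ℝ) * (k - 2 + ε) / (3 - k)) :=
    Real.rpow_le_rpow_of_exponent_ge hD0 hD.le he3
  have hc2 : (0:ℝ) ≤ (1 - lam) * C ^ 2 := by positivity
  refine le_min (le_min ((rSeq_le_P1 (m + 1)).trans ?_) ((rSeq_le_P2 (m + 1)).trans ?_))
    ((min_le_right _ _).trans ?_)
  · rw [hcast]
    rw [div_le_div_iff₀ (by positivity) (by positivity)]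
    apply mul_le_mul_of_nonneg_right _ (by positivity)
    exact mul_le_mul_of_nonneg_left hd1 hc2
  · rw [hcast]
    rw [div_le_div_iff₀ (by positivity) (by positivity)]
    exact mul_le_mul_of_nonneg_right hd1 (by positivity)
  · rw [hcast]
    rw [div_le_div_iff₀ (by norm_num) (by norm_num)]
    exact mul_le_mul_of_nonneg_right hd3 (by norm_num)


set_option maxHeartbeats 2000000 in
/-- Approximation and boundedness of `φ_{n+m,m}` on the ball `B(0, s_m)`. -/
theorem phi_approximation
    (fb gb gbinv : ℕ → (ℂ × ℂ) → (ℂ × ℂ)) (a b c d : ℕ → ℂ) (ch : ℕ → Fin 6 → ℂ)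
    (C D k ε Z lam M : ℝ)
    (hC : 0 < C) (hCD : C < D) (hD : D < 1)
    (hk2 : 2 < k) (hk : k < 11 / 5) (hDk : D ^ k < C)
    (hε : 0 < ε ∧ ε < min (min ((11 - 5 * k) / 4) ((5 - 2 * k) / 3)) ((3 - k) / 2))
    (hZ : 0 < Z) (hlam : 0 < lam ∧ lam < 1) (hDlam : D ^ k < lam * C)
    -- the maps f̄ₙ
    (hfhol : ∀ n, AnalyticOn ℂ (fb n) (ball (0 : ℂ × ℂ) 1))
    (hfinj : ∀ n, InjOn (fb n) (ball (0 : ℂ × ℂ) 1))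
    (hf0 : ∀ n, fb n 0 = 0)
    (hfattr : ∀ n, ∀ z : ℂ × ℂ, ‖z‖ < 1 → C * ‖z‖ ≤ ‖fb n z‖ ∧ ‖fb n z‖ ≤ D * ‖z‖)
    -- the coefficients of gₙ
    (ha : ∀ n, C ≤ ‖a n‖ ∧ ‖a n‖ ≤ D)
    (hb : ∀ n, C ≤ ‖b n‖ ∧ ‖b n‖ ≤ D)
    (hc : ∀ n, ‖c n‖ ≤ D)
    (hd : ∀ n, ‖d n‖ ≤ Z * D ^ (-(2 * (n : ℝ)) * (k - 2 + ε)))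
    -- ḡₙ is gₙ or gₙ composed with a unitary matrix
    (hgb : ∀ n, gb n = gMap (a n) (b n) (c n) (d n) ∨
      ∃ Mu : (ℂ × ℂ) ≃ₗᵢ[ℂ] (ℂ × ℂ), gb n = gMap (a n) (b n) (c n) (d n) ∘ Mu)
    -- ḡₙ⁻¹ is a two-sided inverse of ḡₙ
    (hginv : ∀ n, Function.LeftInverse (gbinv n) (gb n) ∧
      Function.RightInverse (gbinv n) (gb n))
    -- the quadratic coefficients of h̄ₙ
    (hch : ∀ n, ∀ i, ‖ch n i‖ ≤ Z * D ^ (-(2 * (n : ℝ)) * (k - 2 + ε)))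
    -- the degree-2 Taylor polynomials of ḡₙ∘h̄ₙ and h̄ₙ₊₁∘f̄ₙ coincide at 0
    (htaylor : ∀ n, ∀ i : ℕ, i ≤ 2 →
      iteratedFDeriv ℂ i (gb n ∘ hBar ch n) 0 =
        iteratedFDeriv ℂ i (hBar ch (n + 1) ∘ fb n) 0)
    -- M is the one-step comparison constant
    (hM : 0 < M)
    (hMest : ∀ n, ∀ z : ℂ × ℂ, ‖z‖ ≤ rSeq C D k ε Z lam n →
      ‖hBar ch n z - gbinv n (hBar ch (n + 1) (fb n z))‖ ≤ M * ‖z‖ ^ k) :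
    ∀ m n : ℕ, ∀ w : ℂ × ℂ, ‖w‖ ≤ sSeq C D k ε Z lam M m →
      ‖phiMap gbinv ch fb (n + m) m w - hBar ch m w‖
          ≤ M / (1 - D ^ k / (lam * C)) * ‖w‖ ^ k ∧
      ‖phiMap gbinv ch fb (n + m) m w‖
          ≤ (M / (1 - D ^ k / (lam * C)) + 2) * ‖w‖ := by
  obtain ⟨hε0, hεlt⟩ := hε
  obtain ⟨hlam0, hlam1⟩ := hlam
  have hD0 : 0 < D := hC.trans hCD
  have hke0 : 0 < k - 2 + ε := by linarith
  have h3k : 0 < 3 - k := by linarith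
  have hεA : ε < (11 - 5 * k) / 4 :=
    lt_of_lt_of_le hεlt (le_trans (min_le_left _ _) (min_le_left _ _))
  have h1lam : 0 < 1 - lam := by linarith
  have hlamC : 0 < lam * C := by positivity
  have hQ0 : 0 < D ^ k := Real.rpow_pos_of_pos hD0 k
  have hQ1 : D ^ k / (lam * C) < 1 := (div_lt_one hlamC).2 hDlam
  have h1Q : 0 < 1 - D ^ k / (lam * C) := by
    have : 0 < D ^ k / (lam * C) := div_pos hQ0 hlamC
    linarith
  have hMQ : 0 ≤ M / (1 - D ^ k / (lam * C)) := (div_pos hM h1Q).le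
  have hK0 : 0 < M / (1 - D ^ k / (lam * C)) + 2 := by linarith
  have hrpos : ∀ j : ℕ, 0 < rSeq C D k ε Z lam j := fun j => rSeq_pos hC hD0 hZ h1lam j
  have hs_le_r : ∀ j : ℕ, sSeq C D k ε Z lam M j ≤ rSeq C D k ε Z lam j := by
    intro j
    unfold sSeq
    calc (M / (1 - D ^ k / (lam * C)) + 2)⁻¹ * rSeq C D k ε Z lam j
        ≤ 1 * rSeq C D k ε Z lam j := by
          apply mul_le_mul_of_nonneg_right _ (hrpos j).le
          rw [inv_eq_one_div]
          exact (div_le_one hK0).2 (by linarith)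
      _ = rSeq C D k ε Z lam j := one_mul _
  have hwlt1 : ∀ (j : ℕ) (w : ℂ × ℂ), ‖w‖ ≤ sSeq C D k ε Z lam M j → ‖w‖ < 1 := by
    intro j w hw
    have := hw.trans ((hs_le_r j).trans (rSeq_le_half hD0 hD hke0.le h3k j))
    linarith
  have hDe1 : D ≤ D ^ (2 * (k - 2 + ε)) := by
    have h := Real.rpow_le_rpow_of_exponent_ge hD0 hD.le
      (show 2 * (k - 2 + ε) ≤ 1 by linarith)
    simpa using h
  have hDe3 : D ≤ D ^ (4 * (k - 2 + ε) / (3 - k)) := by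
    have hle : 4 * (k - 2 + ε) / (3 - k) ≤ 1 := (div_le_one h3k).2 (by linarith)
    have h := Real.rpow_le_rpow_of_exponent_ge hD0 hD.le hle
    simpa using h
  have hDr : ∀ j : ℕ, D * rSeq C D k ε Z lam j ≤ rSeq C D k ε Z lam (j + 1) :=
    fun j => rSeq_step hC hD0 hD hZ h1lam hke0.le h3k hDe1 hDe3 j
  have hranti : ∀ j : ℕ, rSeq C D k ε Z lam (j + 1) ≤ rSeq C D k ε Z lam j :=
    fun j => rSeq_antitone hC hD0 hD hZ h1lam hke0.le h3k j
  have hDs : ∀ j : ℕ, D * sSeq C D k ε Z lam M j ≤ sSeq C D k ε Z lam M (j + 1) := by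
    intro j
    unfold sSeq
    calc D * ((M / (1 - D ^ k / (lam * C)) + 2)⁻¹ * rSeq C D k ε Z lam j)
        = (M / (1 - D ^ k / (lam * C)) + 2)⁻¹ * (D * rSeq C D k ε Z lam j) := by ring
      _ ≤ (M / (1 - D ^ k / (lam * C)) + 2)⁻¹ * rSeq C D k ε Z lam (j + 1) :=
          mul_le_mul_of_nonneg_left (hDr j) (inv_nonneg.2 hK0.le)
  have hKs : ∀ j : ℕ, (M / (1 - D ^ k / (lam * C)) + 2) * sSeq C D k ε Z lam M j
      = rSeq C D k ε Z lam j := by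
    intro j
    unfold sSeq
    rw [← mul_assoc, mul_inv_cancel₀ hK0.ne', one_mul]
  have hd2r : ∀ j : ℕ, ‖d j‖ * (2 * rSeq C D k ε Z lam j)
      ≤ (1 - lam) * C ^ 2 := by
    intro j
    have hA : (0:ℝ) < D ^ (2 * (j:ℝ) * (k - 2 + ε)) := Real.rpow_pos_of_pos hD0 _
    have hdm := hd j
    rw [show -(2 * (j:ℝ)) * (k - 2 + ε) = -(2 * (j:ℝ) * (k - 2 + ε)) by ring,
      Real.rpow_neg hD0.le] at hdm
    calc ‖d j‖ * (2 * rSeq C D k ε Z lam j)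
        ≤ Z * (D ^ (2 * (j:ℝ) * (k - 2 + ε)))⁻¹
          * (2 * ((1 - lam) * C ^ 2 * D ^ (2 * (j:ℝ) * (k - 2 + ε)) / (2 * Z))) := by
          apply mul_le_mul hdm _ _ (by positivity)
          · linarith [rSeq_le_P1 (C := C) (D := D) (k := k) (ε := ε) (Z := Z) (lam := lam) j]
          · linarith [hrpos j]
      _ = (1 - lam) * C ^ 2 := by
          field_simp
  have hbar_le : ∀ (j : ℕ) (x : ℂ × ℂ), ‖x‖ ≤ sSeq C D k ε Z lam M j →
      ‖hBar ch j x‖ ≤ 2 * ‖x‖ := by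
    intro j x hx
    have hA : (0:ℝ) < D ^ (2 * (j:ℝ) * (k - 2 + ε)) := Real.rpow_pos_of_pos hD0 _
    have hchA : ∀ i, ‖ch j i‖ ≤ Z * (D ^ (2 * (j:ℝ) * (k - 2 + ε)))⁻¹ := by
      intro i
      have h := hch j i
      rwa [show -(2 * (j:ℝ)) * (k - 2 + ε) = -(2 * (j:ℝ) * (k - 2 + ε)) by ring,
        Real.rpow_neg hD0.le] at h
    have hsum : ‖ch j 0‖ + ‖ch j 1‖ + ‖ch j 2‖
        + ‖ch j 3‖ + ‖ch j 4‖ + ‖ch j 5‖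
        ≤ 6 * (Z * (D ^ (2 * (j:ℝ) * (k - 2 + ε)))⁻¹) := by
      linarith [hchA 0, hchA 1, hchA 2, hchA 3, hchA 4, hchA 5]
    have hx2 : ‖x‖ ≤ D ^ (2 * (j:ℝ) * (k - 2 + ε)) / (48 * Z) :=
      hx.trans ((hs_le_r j).trans (rSeq_le_P2 j))
    have h1 : ‖quadMap (ch j) x‖ ≤ 6 * (Z * (D ^ (2 * (j:ℝ) * (k - 2 + ε)))⁻¹) * ‖x‖ ^ 2 :=
      (quadMap_norm_le (ch j) x).trans (mul_le_mul_of_nonneg_right hsum (sq_nonneg _))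
    have hB0 : (0:ℝ) ≤ 6 * (Z * (D ^ (2 * (j:ℝ) * (k - 2 + ε)))⁻¹) := by positivity
    have h2 : 6 * (Z * (D ^ (2 * (j:ℝ) * (k - 2 + ε)))⁻¹) * ‖x‖
        ≤ 6 * (Z * (D ^ (2 * (j:ℝ) * (k - 2 + ε)))⁻¹)
          * (D ^ (2 * (j:ℝ) * (k - 2 + ε)) / (48 * Z)) :=
      mul_le_mul_of_nonneg_left hx2 hB0
    have h3 : 6 * (Z * (D ^ (2 * (j:ℝ) * (k - 2 + ε)))⁻¹)
        * (D ^ (2 * (j:ℝ) * (k - 2 + ε)) / (48 * Z)) = 1 / 8 := by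
      field_simp
      ring
    have hquad : ‖quadMap (ch j) x‖ ≤ ‖x‖ := by
      calc ‖quadMap (ch j) x‖
          ≤ 6 * (Z * (D ^ (2 * (j:ℝ) * (k - 2 + ε)))⁻¹) * ‖x‖ ^ 2 := h1
        _ = (6 * (Z * (D ^ (2 * (j:ℝ) * (k - 2 + ε)))⁻¹) * ‖x‖) * ‖x‖ := by ring
        _ ≤ (1 / 8) * ‖x‖ := mul_le_mul_of_nonneg_right (h2.trans_eq h3) (norm_nonneg x)
        _ ≤ ‖x‖ := by linarith [norm_nonneg x]
    have hunf : hBar ch j x = x + quadMap (ch j) x := rfl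
    rw [hunf]
    calc ‖x + quadMap (ch j) x‖ ≤ ‖x‖ + ‖quadMap (ch j) x‖ := norm_add_le _ _
      _ ≤ 2 * ‖x‖ := by linarith
  have lip : ∀ (j : ℕ) (X Y : ℂ × ℂ), ‖X‖ ≤ rSeq C D k ε Z lam j →
      ‖Y‖ ≤ rSeq C D k ε Z lam j →
      lam * C * ‖gbinv j X - gbinv j Y‖ ≤ ‖X - Y‖ := by
    intro j X Y hX hY
    have hdiff : DifferentiableAt ℂ (fb j) 0 := by
      have h0 : (0 : ℂ × ℂ) ∈ ball (0 : ℂ × ℂ) 1 := mem_ball_self one_pos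
      have h1 := (hfhol j 0 h0).differentiableWithinAt
      exact h1.differentiableAt
        (Filter.mem_of_superset (isOpen_ball.mem_nhds h0) (subset_insert _ _))
    exact one_step_contract hC hlam0 hlam1 (ha j).1 (hgb j) (hginv j).2
      (htaylor j 1 (by norm_num)) hdiff (hf0 j) (fun z hz => (hfattr j z hz).1)
      (hd2r j) (hrpos j).le X Y hX hY
  have hgeom : ∀ N : ℝ, M / (1 - D ^ k / (lam * C)) * (D ^ k * N) / (lam * C) + M * N
      = M / (1 - D ^ k / (lam * C)) * N := by
    intro N
    have h1 : M / (1 - D ^ k / (lam * C)) * (D ^ k * N) / (lam * C)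
        = M / (1 - D ^ k / (lam * C)) * (D ^ k / (lam * C)) * N := by ring
    rw [h1]
    set q := D ^ k / (lam * C) with hq
    have hne1 : 1 - q ≠ 0 := ne_of_gt h1Q
    field_simp
    ring
  intro m n
  induction n generalizing m with
  | zero =>
    intro w hw
    rw [Nat.zero_add, phiMap_self]
    constructor
    · rw [sub_self, norm_zero]
      exact mul_nonneg hMQ (Real.rpow_nonneg (norm_nonneg w) k)
    · have h1 := hbar_le m w hw
      have h2 : 0 ≤ M / (1 - D ^ k / (lam * C)) * ‖w‖ := mul_nonneg hMQ (norm_nonneg w)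
      have h3 : (M / (1 - D ^ k / (lam * C)) + 2) * ‖w‖
          = M / (1 - D ^ k / (lam * C)) * ‖w‖ + 2 * ‖w‖ := by ring
      linarith
  | succ n ih =>
    intro w hw
    have hw1 : ‖w‖ < 1 := hwlt1 m w hw
    have hfw := hfattr m w hw1
    have hz'D : ‖fb m w‖ ≤ D * ‖w‖ := hfw.2
    have hz's : ‖fb m w‖ ≤ sSeq C D k ε Z lam M (m + 1) := by
      calc ‖fb m w‖ ≤ D * ‖w‖ := hz'D
        _ ≤ D * sSeq C D k ε Z lam M m := mul_le_mul_of_nonneg_left hw hD0.le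
        _ ≤ sSeq C D k ε Z lam M (m + 1) := hDs m
    obtain ⟨ih1, ih2⟩ := ih (m + 1) (fb m w) hz's
    set P := phiMap gbinv ch fb (n + (m + 1)) (m + 1) (fb m w) with hPdef
    set Yv := hBar ch (m + 1) (fb m w) with hYdef
    have hrec : phiMap gbinv ch fb (n + 1 + m) m w = gbinv m P := by
      rw [show n + 1 + m = n + (m + 1) by omega]
      exact phiMap_rec gbinv ch fb (by omega) w
    have hXr : ‖P‖ ≤ rSeq C D k ε Z lam m := by
      calc ‖P‖ ≤ (M / (1 - D ^ k / (lam * C)) + 2) * ‖fb m w‖ := ih2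
        _ ≤ (M / (1 - D ^ k / (lam * C)) + 2) * sSeq C D k ε Z lam M (m + 1) :=
            mul_le_mul_of_nonneg_left hz's hK0.le
        _ = rSeq C D k ε Z lam (m + 1) := hKs (m + 1)
        _ ≤ rSeq C D k ε Z lam m := hranti m
    have hYr : ‖Yv‖ ≤ rSeq C D k ε Z lam m := by
      have hb2 : ‖Yv‖ ≤ 2 * ‖fb m w‖ := hbar_le (m + 1) _ hz's
      have hb3 : 2 * ‖fb m w‖ ≤ (M / (1 - D ^ k / (lam * C)) + 2) * ‖fb m w‖ := by
        have := norm_nonneg (fb m w)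
        nlinarith
      calc ‖Yv‖ ≤ (M / (1 - D ^ k / (lam * C)) + 2) * ‖fb m w‖ := hb2.trans hb3
        _ ≤ (M / (1 - D ^ k / (lam * C)) + 2) * sSeq C D k ε Z lam M (m + 1) :=
            mul_le_mul_of_nonneg_left hz's hK0.le
        _ = rSeq C D k ε Z lam (m + 1) := hKs (m + 1)
        _ ≤ rSeq C D k ε Z lam m := hranti m
    have hlipXY := lip m P Yv hXr hYr
    have hzk : ‖fb m w‖ ^ k ≤ D ^ k * ‖w‖ ^ k := by
      have h4 : ‖fb m w‖ ^ k ≤ (D * ‖w‖) ^ k :=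
        Real.rpow_le_rpow (norm_nonneg _) hz'D (by linarith)
      rwa [Real.mul_rpow hD0.le (norm_nonneg w)] at h4
    have hXY : ‖P - Yv‖ ≤ M / (1 - D ^ k / (lam * C)) * (D ^ k * ‖w‖ ^ k) :=
      ih1.trans (mul_le_mul_of_nonneg_left hzk hMQ)
    have hstep : ‖gbinv m P - gbinv m Yv‖
        ≤ M / (1 - D ^ k / (lam * C)) * (D ^ k * ‖w‖ ^ k) / (lam * C) := by
      rw [le_div_iff₀ hlamC]
      calc ‖gbinv m P - gbinv m Yv‖ * (lam * C)
          = lam * C * ‖gbinv m P - gbinv m Yv‖ := by ring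
        _ ≤ ‖P - Yv‖ := hlipXY
        _ ≤ M / (1 - D ^ k / (lam * C)) * (D ^ k * ‖w‖ ^ k) := hXY
    have hMest' : ‖hBar ch m w - gbinv m Yv‖ ≤ M * ‖w‖ ^ k := by
      rw [hYdef]
      exact hMest m w (hw.trans (hs_le_r m))
    have main1 : ‖phiMap gbinv ch fb (n + 1 + m) m w - hBar ch m w‖
        ≤ M / (1 - D ^ k / (lam * C)) * ‖w‖ ^ k := by
      rw [hrec]
      have hh : gbinv m P - hBar ch m w
          = (gbinv m P - gbinv m Yv) - (hBar ch m w - gbinv m Yv) := by abel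
      calc ‖gbinv m P - hBar ch m w‖
          ≤ ‖gbinv m P - gbinv m Yv‖ + ‖hBar ch m w - gbinv m Yv‖ := by
            rw [hh]; exact norm_sub_le _ _
        _ ≤ M / (1 - D ^ k / (lam * C)) * (D ^ k * ‖w‖ ^ k) / (lam * C) + M * ‖w‖ ^ k :=
            add_le_add hstep hMest'
        _ = M / (1 - D ^ k / (lam * C)) * ‖w‖ ^ k := hgeom (‖w‖ ^ k)
    refine ⟨main1, ?_⟩
    rw [hrec]
    have main1' := main1
    rw [hrec] at main1'
    have h0 : ‖gbinv m P‖ ≤ ‖gbinv m P - hBar ch m w‖ + ‖hBar ch m w‖ := by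
      calc ‖gbinv m P‖ = ‖gbinv m P - hBar ch m w + hBar ch m w‖ := by rw [sub_add_cancel]
        _ ≤ ‖gbinv m P - hBar ch m w‖ + ‖hBar ch m w‖ := norm_add_le _ _
    have h2 : M / (1 - D ^ k / (lam * C)) * ‖w‖ ^ k ≤ M / (1 - D ^ k / (lam * C)) * ‖w‖ :=
      mul_le_mul_of_nonneg_left
        (rpow_le_self_of_le_one (norm_nonneg w) hw1.le (by linarith)) hMQ
    have h3 := hbar_le m w hw
    have h4 : (M / (1 - D ^ k / (lam * C)) + 2) * ‖w‖
        = M / (1 - D ^ k / (lam * C)) * ‖w‖ + 2 * ‖w‖ := by ring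
    linarith
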